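/- arXiv:1205.5870 — 2 statements merged into one kernel-verified Lean document; each statement's English description precedes it below -/
import Mathlib

section
/- Let K : ℝ → ℝ be even, integrable with ∫_ℝ K = 1, bounded on [−1,1], and with sup_x x²|K(x)| < ∞. Let f : ℝ → ℝ be uniformly continuous and bounded with modulus of continuity ω(f;·). Then there is a constant C (depending only on K) such that for all λ > 1, sup_x |λ∫_ℝ f(t)K(λ(t−x))dt − f(x)| ≤ C·(1/λ)∫₁^λ ω(f;1/u) du + C·ω(f;1/λ). -/
open MeasureTheory Real

/-- The sup-norm modulus of continuity of `f`. -/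
noncomputable def modulus (f : ℝ → ℝ) (t : ℝ) : ℝ :=
  sSup {y : ℝ | ∃ s x : ℝ, 0 ≤ s ∧ s ≤ t ∧ y = |f (x + s) - f x|}

section ModulusLemmas

variable {f : ℝ → ℝ} {M : ℝ}

lemma mod_bdd (hM : ∀ x, |f x| ≤ M) (t : ℝ) :
    BddAbove {y : ℝ | ∃ s x : ℝ, 0 ≤ s ∧ s ≤ t ∧ y = |f (x + s) - f x|} := by
  refine ⟨2 * M, ?_⟩
  rintro y ⟨s, x, _, _, rfl⟩
  calc |f (x + s) - f x| ≤ |f (x + s)| + |f x| := abs_sub _ _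
    _ ≤ M + M := add_le_add (hM _) (hM _)
    _ = 2 * M := by ring

lemma mod_le_of (hM : ∀ x, |f x| ≤ M) {s t : ℝ} (x : ℝ) (h0 : 0 ≤ s) (hst : s ≤ t) :
    |f (x + s) - f x| ≤ modulus f t :=
  le_csSup (mod_bdd hM t) ⟨s, x, h0, hst, rfl⟩

lemma mod_nonneg (hM : ∀ x, |f x| ≤ M) {t : ℝ} (ht : 0 ≤ t) : 0 ≤ modulus f t := by
  simpa using mod_le_of hM (s := 0) (0 : ℝ) le_rfl ht

lemma mod_le {t c : ℝ} (h : ∀ s x : ℝ, 0 ≤ s → s ≤ t → |f (x + s) - f x| ≤ c)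
    (hc : 0 ≤ c) : modulus f t ≤ c := by
  refine Real.sSup_le ?_ hc
  rintro y ⟨s, x, h0, hst, rfl⟩
  exact h s x h0 hst

lemma mod_abs_le (hM : ∀ x, |f x| ≤ M) (x y : ℝ) :
    |f y - f x| ≤ modulus f |y - x| := by
  rcases le_total x y with h | h
  · have := mod_le_of hM (s := y - x) x (by linarith) (le_abs_self _)
    simpa [abs_of_nonneg (sub_nonneg.2 h)] using this
  · have h2 : x - y ≤ |y - x| := by rw [abs_sub_comm]; exact le_abs_self _
    have := mod_le_of hM (s := x - y) y (by linarith) h2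
    have hxy : y + (x - y) = x := by ring
    rw [hxy] at this
    rwa [abs_sub_comm] 

lemma mod_mono (hM : ∀ x, |f x| ≤ M) : Monotone (modulus f) := by
  intro a b hab
  by_cases ha : 0 ≤ a
  · refine csSup_le_csSup (mod_bdd hM b) ⟨|f (0 + 0) - f 0|, 0, 0, le_rfl, ha, rfl⟩ ?_
    rintro y ⟨s, x, h0, hst, rfl⟩
    exact ⟨s, x, h0, hst.trans hab, rfl⟩
  · push_neg at ha
    have : {y : ℝ | ∃ s x : ℝ, 0 ≤ s ∧ s ≤ a ∧ y = |f (x + s) - f x|} = ∅ := by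
      ext y; simp only [Set.mem_setOf_eq, Set.mem_empty_iff_false, iff_false]
      rintro ⟨s, x, h0, hst, rfl⟩; linarith
    rw [modulus, this, Real.sSup_empty]
    by_cases hb : 0 ≤ b
    · exact mod_nonneg hM hb
    · push_neg at hb
      have : {y : ℝ | ∃ s x : ℝ, 0 ≤ s ∧ s ≤ b ∧ y = |f (x + s) - f x|} = ∅ := by
        ext y; simp only [Set.mem_setOf_eq, Set.mem_empty_iff_false, iff_false]
        rintro ⟨s, x, h0, hst, rfl⟩; linarith
      rw [modulus, this, Real.sSup_empty]

lemma mod_subadd (hM : ∀ x, |f x| ≤ M) {a b : ℝ} (ha : 0 ≤ a) (hb : 0 ≤ b) :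
    modulus f (a + b) ≤ modulus f a + modulus f b := by
  refine mod_le ?_ (add_nonneg (mod_nonneg hM ha) (mod_nonneg hM hb))
  intro s x h0 hs
  by_cases hsa : s ≤ a
  · exact (mod_le_of hM x h0 hsa).trans (le_add_of_nonneg_right (mod_nonneg hM hb))
  · push_neg at hsa
    have key : |f (x + s) - f x| ≤ |f (x + s) - f (x + a)| + |f (x + a) - f x| :=
      abs_sub_le _ _ _
    have h1 : |f ((x + a) + (s - a)) - f (x + a)| ≤ modulus f b :=
      mod_le_of hM (x + a) (by linarith) (by linarith)
    have h2 : |f (x + a) - f x| ≤ modulus f a := mod_le_of hM x ha le_rfl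
    have he : (x + a) + (s - a) = x + s := by ring
    rw [he] at h1
    linarith

lemma mod_zero (hM : ∀ x, |f x| ≤ M) : modulus f 0 = 0 := by
  refine le_antisymm (mod_le ?_ le_rfl) (mod_nonneg hM le_rfl)
  intro s x h0 hs
  have : s = 0 := le_antisymm hs h0
  simp [this]

lemma mod_nat (hM : ∀ x, |f x| ≤ M) {h : ℝ} (hh : 0 ≤ h) :
    ∀ n : ℕ, ∀ s : ℝ, 0 ≤ s → s ≤ n * h → modulus f s ≤ n * modulus f h := by
  intro n
  induction n with
  | zero =>
    intro s h0 hs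
    have : s = 0 := le_antisymm (by simpa using hs) h0
    simp [this, mod_zero hM]
  | succ n ih =>
    intro s h0 hs
    have hωh : 0 ≤ modulus f h := mod_nonneg hM hh
    by_cases hsh : s ≤ h
    · have := mod_mono hM hsh
      push_cast
      nlinarith
    · push_neg at hsh
      have h1 : modulus f ((s - h) + h) ≤ modulus f (s - h) + modulus f h :=
        mod_subadd hM (by linarith) hh
      rw [sub_add_cancel] at h1
      have h2 : modulus f (s - h) ≤ n * modulus f h := by
        refine ih (s - h) (by linarith) ?_
        push_cast at hs ⊢
        linarith
      push_cast
      linarith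

lemma mod_small (hfu : UniformContinuous f) {ε : ℝ} (hε : 0 < ε) :
    ∃ δ > 0, ∀ t : ℝ, t < δ → modulus f t ≤ ε := by
  obtain ⟨δ, hδ, hδ'⟩ := Metric.uniformContinuous_iff.1 hfu ε hε
  refine ⟨δ, hδ, fun t ht => ?_⟩
  refine mod_le ?_ hε.le
  intro s x h0 hst
  have : dist (x + s) x < δ := by
    rw [Real.dist_eq]
    simp only [add_sub_cancel_left]
    rw [abs_of_nonneg h0]; linarith
  have := hδ' this
  rw [Real.dist_eq] at this
  exact this.le

lemma mod_contOn (hfu : UniformContinuous f) (hM : ∀ x, |f x| ≤ M) :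
    ContinuousOn (modulus f) (Set.Ici (0 : ℝ)) := by
  intro t₀ ht₀
  rw [Metric.continuousWithinAt_iff]
  intro ε hε
  obtain ⟨δ, hδ, hδ'⟩ := mod_small hfu (half_pos hε)
  refine ⟨δ, hδ, fun t ht hd => ?_⟩
  have ht0 : (0:ℝ) ≤ t := ht
  have ht₀0 : (0:ℝ) ≤ t₀ := ht₀
  rw [Real.dist_eq] at hd ⊢
  have key : |modulus f t - modulus f t₀| ≤ modulus f |t - t₀| := by
    rcases le_total t t₀ with h | h
    · have h1 : modulus f t₀ ≤ modulus f t + modulus f (t₀ - t) := by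
        have := mod_subadd hM ht0 (sub_nonneg.2 h)
        rwa [add_sub_cancel] at this
      have h2 : modulus f t ≤ modulus f t₀ := mod_mono hM h
      have h3 : modulus f (t₀ - t) = modulus f |t - t₀| := by
        rw [abs_sub_comm, abs_of_nonneg (sub_nonneg.2 h)]
      rw [abs_of_nonpos (by linarith)]
      linarith
    · have h1 : modulus f t ≤ modulus f t₀ + modulus f (t - t₀) := by
        have := mod_subadd hM ht₀0 (sub_nonneg.2 h)
        rwa [add_sub_cancel] at this
      have h2 : modulus f t₀ ≤ modulus f t := mod_mono hM h
      have h3 : modulus f (t - t₀) = modulus f |t - t₀| := by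
        rw [abs_of_nonneg (sub_nonneg.2 h)]
      rw [abs_of_nonneg (by linarith)]
      linarith
  have := hδ' _ hd
  linarith

end ModulusLemmas

lemma subst_key (f : ℝ → ℝ) (hfu : UniformContinuous f) {M : ℝ} (hM : ∀ x, |f x| ≤ M)
    {l M0 : ℝ} (hl : 1 < l) :
    ∫ u in Set.Ioc (1:ℝ) l, modulus f (u / l) * (M0 / u ^ 2)
      = (M0 / l) * ∫ u in Set.Ioc (1:ℝ) l, modulus f (1 / u) := by
  have hl0 : (0:ℝ) < l := one_pos.trans hl
  have h1l : (1:ℝ) ≤ l := hl.le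
  rw [← intervalIntegral.integral_of_le h1l, ← intervalIntegral.integral_of_le h1l]
  have huIcc : Set.uIcc (1:ℝ) l = Set.Icc 1 l := Set.uIcc_of_le h1l
  set g : ℝ → ℝ := fun u => modulus f (u / l) * (M0 / u ^ 2) with hg
  have hgcont : ContinuousOn g (Set.Icc 1 l) := by
    apply ContinuousOn.mul
    · refine (mod_contOn hfu hM).comp ((continuous_id.div_const l).continuousOn) ?_
      intro u hu
      exact div_nonneg (by linarith [hu.1]) hl0.le
    · exact continuousOn_const.div (continuous_pow 2).continuousOn
        (fun u hu => pow_ne_zero 2 (by intro h; rw [h] at hu; linarith [hu.1]))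
  have hφcont : ContinuousOn (fun v : ℝ => l / v) (Set.uIcc 1 l) := by
    rw [huIcc]
    exact continuousOn_const.div continuousOn_id
      (fun v hv => by intro h; rw [h] at hv; linarith [hv.1])
  have hderiv : ∀ v ∈ Set.Ioo (min (1:ℝ) l) (max 1 l),
      HasDerivWithinAt (fun v : ℝ => l / v) (-l / v ^ 2) (Set.Ioi v) v := by
    intro v hv
    rw [min_eq_left h1l, max_eq_right h1l] at hv
    have hv0 : v ≠ 0 := by intro h; rw [h] at hv; linarith [hv.1]
    have h1 : HasDerivAt (fun y : ℝ => l * y⁻¹) (l * -(v ^ 2)⁻¹) v :=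
      (hasDerivAt_inv hv0).const_mul l
    have h2 : HasDerivAt (fun v : ℝ => l / v) (-l / v ^ 2) v := by
      have he : (fun v : ℝ => l / v) = fun y : ℝ => l * y⁻¹ := by
        funext y; rw [div_eq_mul_inv]
      rw [he]
      convert h1 using 1
      field_simp
    exact h2.hasDerivWithinAt
  have hφ'cont : ContinuousOn (fun v : ℝ => -l / v ^ 2) (Set.uIcc 1 l) := by
    rw [huIcc]
    exact continuousOn_const.div (continuous_pow 2).continuousOn
      (fun v hv => pow_ne_zero 2 (by intro h; rw [h] at hv; linarith [hv.1]))
  have himg : ContinuousOn g ((fun v : ℝ => l / v) '' Set.uIcc 1 l) := by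
    refine hgcont.mono ?_
    rintro _ ⟨v, hv, rfl⟩
    rw [huIcc] at hv
    have hv0 : (0:ℝ) < v := lt_of_lt_of_le one_pos hv.1
    exact ⟨(one_le_div hv0).2 hv.2, div_le_self hl0.le hv.1⟩
  have key := intervalIntegral.integral_comp_smul_deriv'' hφcont hderiv hφ'cont himg
  rw [div_one, div_self hl0.ne'] at key
  have hsym : (∫ u in l..(1:ℝ), g u) = -∫ u in (1:ℝ)..l, g u :=
    intervalIntegral.integral_symm 1 l
  rw [hsym] at key
  have hcong : Set.EqOn (fun v : ℝ => (-l / v ^ 2) • ((g ∘ fun v : ℝ => l / v) v))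
      (fun v : ℝ => (-(M0 / l)) * modulus f (1 / v)) (Set.uIcc 1 l) := by
    intro v hv
    rw [huIcc] at hv
    have hv0 : (0:ℝ) < v := lt_of_lt_of_le one_pos hv.1
    simp only [Function.comp, smul_eq_mul, hg]
    rw [show l / v / l = 1 / v by field_simp; try ring]
    field_simp
    try ring
  rw [intervalIntegral.integral_congr hcong, intervalIntegral.integral_const_mul] at key
  linarith [key]

theorem fejer_type_uniform_estimate (K : ℝ → ℝ)
    (hKe : ∀ t : ℝ, K (-t) = K t) (hKi : Integrable K) (hK1 : ∫ t : ℝ, K t = 1)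
    (hKb : ∃ M : ℝ, ∀ x ∈ Set.Icc (-1:ℝ) 1, |K x| ≤ M)
    (hKd : ∃ M : ℝ, ∀ x : ℝ, x ^ 2 * |K x| ≤ M)
    (f : ℝ → ℝ) (hf : UniformContinuous f) (hb : ∃ M : ℝ, ∀ x, |f x| ≤ M) :
    ∃ C : ℝ, ∀ l : ℝ, 1 < l → ∀ x : ℝ,
      |(l * ∫ t : ℝ, f t * K (l * (t - x))) - f x| ≤
        C * ((1 / l) * ∫ u in Set.Ioc (1:ℝ) l, modulus f (1 / u)) +
          C * modulus f (1 / l) := by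
  obtain ⟨M0, hM0⟩ := hKd
  obtain ⟨Mf, hMf⟩ := hb
  have hMf0 : 0 ≤ Mf := (abs_nonneg _).trans (hMf 0)
  have hM00 : 0 ≤ M0 := le_trans (by positivity) (hM0 1)
  set IK : ℝ := ∫ u : ℝ, |K u| with hIKdef
  have hIK0 : 0 ≤ IK := integral_nonneg fun u => abs_nonneg _
  have hfc : Continuous f := hf.continuous
  -- Step 1 : change of variables
  have step1 : ∀ l : ℝ, 1 < l → ∀ x : ℝ,
      l * ∫ t : ℝ, f t * K (l * (t - x)) = ∫ u : ℝ, f (x + u / l) * K u := by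
    intro l hl x
    have hl0 : (0:ℝ) < l := one_pos.trans hl
    set G : ℝ → ℝ := fun u => f (x + u / l) * K u with hG
    have harg : ∀ t : ℝ, x + l * (t - x) / l = t := by
      intro t; field_simp; try ring
    have e1 : (fun t : ℝ => f t * K (l * (t - x))) = fun t : ℝ => G (l * (t - x)) := by
      funext t
      simp only [hG, harg]
    have e2 : (∫ t : ℝ, G (l * (t - x))) = ∫ t : ℝ, (fun s : ℝ => G (l * s)) (t - x) := rfl
    have e3 : (∫ t : ℝ, (fun s : ℝ => G (l * s)) (t - x)) = ∫ s : ℝ, G (l * s) :=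
      integral_sub_right_eq_self (fun s : ℝ => G (l * s)) x
    have e4 : (∫ s : ℝ, G (l * s)) = |l⁻¹| • ∫ u : ℝ, G u :=
      MeasureTheory.Measure.integral_comp_mul_left G l
    rw [e1, e2, e3, e4, abs_of_pos (inv_pos.2 hl0), smul_eq_mul, ← mul_assoc,
      mul_inv_cancel₀ hl0.ne', one_mul]
  -- modulus of f at 1 is nonneg
  have hmod1 : 0 ≤ modulus f 1 := mod_nonneg hMf zero_le_one
  by_cases hcase : modulus f 1 = 0
  · -- f is constant
    have hstep : ∀ a s : ℝ, 0 ≤ s → s ≤ 1 → f (a + s) = f a := by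
      intro a s h0 hs
      have := mod_le_of hMf (s := s) a h0 hs
      rw [hcase] at this
      have h0' := abs_eq_zero.1 (le_antisymm this (abs_nonneg _))
      linarith [sub_eq_zero.1 h0']
    have haux : ∀ n : ℕ, ∀ a s : ℝ, 0 ≤ s → s ≤ n → f (a + s) = f a := by
      intro n
      induction n with
      | zero => intro a s h0 hs; have : s = 0 := le_antisymm (by simpa using hs) h0; simp [this]
      | succ n ih =>
        intro a s h0 hs
        by_cases h1 : s ≤ 1
        · exact hstep a s h0 h1
        · push_neg at h1
          have e1 : f (a + (s - 1) + 1) = f (a + (s - 1)) :=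
            hstep (a + (s - 1)) 1 zero_le_one le_rfl
          have e2 : a + (s - 1) + 1 = a + s := by ring
          rw [e2] at e1
          rw [e1]
          refine ih a (s - 1) (by linarith) ?_
          push_cast at hs ⊢
          linarith
    have hconst : ∀ a b : ℝ, f a = f b := by
      have key : ∀ a s : ℝ, 0 ≤ s → f (a + s) = f a := by
        intro a s h0
        obtain ⟨n, hn⟩ := exists_nat_ge s
        exact haux n a s h0 hn
      intro a b
      rcases le_total a b with h | h
      · have := key a (b - a) (by linarith)
        rw [show a + (b - a) = b by ring] at this
        exact this.symm
      · have := key b (a - b) (by linarith)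
        rw [show b + (a - b) = a by ring] at this
        exact this
    refine ⟨1, fun l hl x => ?_⟩
    have hl0 : (0:ℝ) < l := one_pos.trans hl
    have e5 : (∫ u : ℝ, f (x + u / l) * K u) = f x := by
      have : (fun u : ℝ => f (x + u / l) * K u) = fun u : ℝ => f x * K u := by
        funext u; rw [hconst (x + u / l) x]
      rw [this, MeasureTheory.integral_const_mul, hK1, mul_one]
    rw [step1 l hl x, e5, sub_self, abs_zero]
    have hJ : 0 ≤ ∫ u in Set.Ioc (1:ℝ) l, modulus f (1 / u) :=
      MeasureTheory.setIntegral_nonneg measurableSet_Ioc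
        (fun u hu => mod_nonneg hMf (div_nonneg zero_le_one (by linarith [hu.1])))
    have h2 : 0 ≤ modulus f (1 / l) := mod_nonneg hMf (by positivity)
    have h3 : 0 ≤ (1 / l) * ∫ u in Set.Ioc (1:ℝ) l, modulus f (1 / u) := by positivity
    linarith
  · -- main case
    have hω1pos : 0 < modulus f 1 := lt_of_le_of_ne hmod1 (Ne.symm hcase)
    refine ⟨max (2 * M0) (2 * IK + 8 * Mf * M0 / modulus f 1), fun l hl x => ?_⟩
    have hl0 : (0:ℝ) < l := one_pos.trans hl
    have h1l : (1:ℝ) ≤ l := hl.le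
    set J : ℝ := ∫ u in Set.Ioc (1:ℝ) l, modulus f (1 / u) with hJdef
    have hJ0 : 0 ≤ J :=
      MeasureTheory.setIntegral_nonneg measurableSet_Ioc
        (fun u hu => mod_nonneg hMf (div_nonneg zero_le_one (by linarith [hu.1])))
    have hωl0 : 0 ≤ modulus f (1 / l) := mod_nonneg hMf (by positivity)
    set h₁ : ℝ → ℝ := fun u => |f (x + u / l) - f x| * |K u| with hh₁
    set h₂ : ℝ → ℝ := fun u => |f (x - u / l) - f x| * |K u| with hh₂
    have hcont1 : Continuous fun u : ℝ => |f (x + u / l) - f x| :=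
      ((hfc.comp (continuous_const.add (continuous_id.div_const l))).sub continuous_const).abs
    have hcont2 : Continuous fun u : ℝ => |f (x - u / l) - f x| :=
      ((hfc.comp (continuous_const.sub (continuous_id.div_const l))).sub continuous_const).abs
    have hfb : ∀ y : ℝ, |f y - f x| ≤ 2 * Mf := fun y =>
      (abs_sub _ _).trans (by linarith [hMf y, hMf x])
    have Ih₁ : Integrable h₁ :=
      hKi.abs.bdd_mul hcont1.aestronglyMeasurable
        (Filter.Eventually.of_forall fun u => by rw [Real.norm_eq_abs, abs_abs]; exact hfb _)
    have Ih₂ : Integrable h₂ :=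
      hKi.abs.bdd_mul hcont2.aestronglyMeasurable
        (Filter.Eventually.of_forall fun u => by rw [Real.norm_eq_abs, abs_abs]; exact hfb _)
    have hfd1 : ∀ u : ℝ, 0 ≤ u → |f (x + u / l) - f x| ≤ modulus f (u / l) :=
      fun u hu => mod_le_of hMf x (div_nonneg hu hl0.le) le_rfl
    have hfd2 : ∀ u : ℝ, 0 ≤ u → |f (x - u / l) - f x| ≤ modulus f (u / l) := by
      intro u hu
      have h' := mod_le_of hMf (s := u / l) (x - u / l) (div_nonneg hu hl0.le) le_rfl
      rw [sub_add_cancel] at h'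
      rwa [abs_sub_comm]
    have hKbd : ∀ u : ℝ, 0 < u → |K u| ≤ M0 / u ^ 2 := fun u hu => by
      rw [le_div_iff₀ (by positivity)]
      calc |K u| * u ^ 2 = u ^ 2 * |K u| := by ring
        _ ≤ M0 := hM0 u
    have hrpow : ∀ u : ℝ, 0 < u → u ^ (-2:ℝ) = (u ^ 2)⁻¹ := fun u hu => by
      rw [show ((-2:ℝ)) = -((2:ℕ):ℝ) by norm_num, Real.rpow_neg hu.le, Real.rpow_natCast]
    -- the main estimate for a nonnegative integrand
    have claim : ∀ h₀ : ℝ → ℝ, Integrable h₀ →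
        (∀ u ∈ Set.Ioc (0:ℝ) 1, h₀ u ≤ modulus f (1 / l) * |K u|) →
        (∀ u ∈ Set.Ioc (1:ℝ) l, h₀ u ≤ modulus f (u / l) * (M0 / u ^ 2)) →
        (∀ u ∈ Set.Ioi l, h₀ u ≤ (2 * Mf * M0) * u ^ (-2:ℝ)) →
        (∫ u in Set.Ioi (0:ℝ), h₀ u) ≤
          modulus f (1 / l) * IK + (M0 / l) * J + 2 * Mf * M0 / l := by
      intro h₀ hint hb1 hb2 hb3
      have hsplit1 : (∫ u in Set.Ioi (0:ℝ), h₀ u) =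
          (∫ u in Set.Ioc (0:ℝ) l, h₀ u) + ∫ u in Set.Ioi l, h₀ u := by
        rw [← Set.Ioc_union_Ioi_eq_Ioi hl0.le,
          setIntegral_union Set.Ioc_disjoint_Ioi_same measurableSet_Ioi
            hint.integrableOn hint.integrableOn]
      have hsplit2 : (∫ u in Set.Ioc (0:ℝ) l, h₀ u) =
          (∫ u in Set.Ioc (0:ℝ) 1, h₀ u) + ∫ u in Set.Ioc (1:ℝ) l, h₀ u := by
        rw [← Set.Ioc_union_Ioc_eq_Ioc zero_le_one h1l,
          setIntegral_union (Set.Ioc_disjoint_Ioc_of_le le_rfl) measurableSet_Ioc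
            hint.integrableOn hint.integrableOn]
      have hA : (∫ u in Set.Ioc (0:ℝ) 1, h₀ u) ≤ modulus f (1 / l) * IK := by
        calc (∫ u in Set.Ioc (0:ℝ) 1, h₀ u)
            ≤ ∫ u in Set.Ioc (0:ℝ) 1, modulus f (1 / l) * |K u| :=
              setIntegral_mono_on hint.integrableOn
                ((hKi.abs.const_mul _).integrableOn) measurableSet_Ioc hb1
          _ = modulus f (1 / l) * ∫ u in Set.Ioc (0:ℝ) 1, |K u| := integral_const_mul _ _
          _ ≤ modulus f (1 / l) * IK := by
              refine mul_le_mul_of_nonneg_left ?_ hωl0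
              exact setIntegral_le_integral hKi.abs
                (Filter.Eventually.of_forall fun u => abs_nonneg _)
      have hgmeas : AEStronglyMeasurable (fun u : ℝ => modulus f (u / l) * (M0 / u ^ 2)) volume :=
        (((mod_mono hMf).measurable.comp (measurable_id.div_const l)).mul
          (measurable_const.div (measurable_id.pow_const 2))).aestronglyMeasurable
      have hgint : IntegrableOn (fun u : ℝ => modulus f (u / l) * (M0 / u ^ 2))
          (Set.Ioc (1:ℝ) l) := by
        refine Measure.integrableOn_of_bounded (M := modulus f 1 * M0)
          measure_Ioc_lt_top.ne hgmeas ?_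
        refine (ae_restrict_iff' measurableSet_Ioc).2 (Filter.Eventually.of_forall ?_)
        intro u hu
        have hu0 : (0:ℝ) < u := lt_trans one_pos hu.1
        have hm0 : 0 ≤ modulus f (u / l) := mod_nonneg hMf (by positivity)
        have hmle : modulus f (u / l) ≤ modulus f 1 :=
          mod_mono hMf (by rw [div_le_one hl0]; exact hu.2)
        have hd0 : 0 ≤ M0 / u ^ 2 := by positivity
        have hdle : M0 / u ^ 2 ≤ M0 := by
          rw [div_le_iff₀ (by positivity)]
          have hu2 : (1:ℝ) ≤ u ^ 2 := by nlinarith [hu.1]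
          nlinarith [mul_nonneg hM00 (sub_nonneg.2 hu2)]
        rw [Real.norm_eq_abs, abs_of_nonneg (mul_nonneg hm0 hd0)]
        exact mul_le_mul hmle hdle hd0 hmod1
      have hB : (∫ u in Set.Ioc (1:ℝ) l, h₀ u) ≤ (M0 / l) * J := by
        calc (∫ u in Set.Ioc (1:ℝ) l, h₀ u)
            ≤ ∫ u in Set.Ioc (1:ℝ) l, modulus f (u / l) * (M0 / u ^ 2) :=
              setIntegral_mono_on hint.integrableOn hgint measurableSet_Ioc hb2
          _ = (M0 / l) * J := subst_key f hf hMf hl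
      have hCint : IntegrableOn (fun u : ℝ => (2 * Mf * M0) * u ^ (-2:ℝ)) (Set.Ioi l) :=
        (integrableOn_Ioi_rpow_of_lt (by norm_num) hl0).const_mul _
      have hC : (∫ u in Set.Ioi l, h₀ u) ≤ 2 * Mf * M0 / l := by
        calc (∫ u in Set.Ioi l, h₀ u)
            ≤ ∫ u in Set.Ioi l, (2 * Mf * M0) * u ^ (-2:ℝ) :=
              setIntegral_mono_on hint.integrableOn hCint measurableSet_Ioi hb3
          _ = (2 * Mf * M0) * ∫ u in Set.Ioi l, u ^ (-2:ℝ) := integral_const_mul _ _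
          _ = 2 * Mf * M0 / l := by
              rw [integral_Ioi_rpow_of_lt (by norm_num) hl0,
                show ((-2:ℝ) + 1) = -1 by norm_num, Real.rpow_neg_one]
              field_simp
      linarith
    -- pointwise bounds for h₁ and h₂
    have hb1₁ : ∀ u ∈ Set.Ioc (0:ℝ) 1, h₁ u ≤ modulus f (1 / l) * |K u| := by
      intro u hu
      refine mul_le_mul_of_nonneg_right ((hfd1 u hu.1.le).trans ?_) (abs_nonneg _)
      exact mod_mono hMf (by rw [div_le_div_iff₀ hl0 hl0]; nlinarith [hu.2])
    have hb1₂ : ∀ u ∈ Set.Ioc (0:ℝ) 1, h₂ u ≤ modulus f (1 / l) * |K u| := by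
      intro u hu
      refine mul_le_mul_of_nonneg_right ((hfd2 u hu.1.le).trans ?_) (abs_nonneg _)
      exact mod_mono hMf (by rw [div_le_div_iff₀ hl0 hl0]; nlinarith [hu.2])
    have hb2₁ : ∀ u ∈ Set.Ioc (1:ℝ) l, h₁ u ≤ modulus f (u / l) * (M0 / u ^ 2) := by
      intro u hu
      have hu0 : (0:ℝ) < u := lt_trans one_pos hu.1
      exact mul_le_mul (hfd1 u hu0.le) (hKbd u hu0) (abs_nonneg _)
        (mod_nonneg hMf (by positivity))
    have hb2₂ : ∀ u ∈ Set.Ioc (1:ℝ) l, h₂ u ≤ modulus f (u / l) * (M0 / u ^ 2) := by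
      intro u hu
      have hu0 : (0:ℝ) < u := lt_trans one_pos hu.1
      exact mul_le_mul (hfd2 u hu0.le) (hKbd u hu0) (abs_nonneg _)
        (mod_nonneg hMf (by positivity))
    have hb3₁ : ∀ u ∈ Set.Ioi l, h₁ u ≤ (2 * Mf * M0) * u ^ (-2:ℝ) := by
      intro u hu
      have hu0 : (0:ℝ) < u := lt_trans hl0 hu
      rw [hrpow u hu0]
      calc h₁ u ≤ (2 * Mf) * (M0 / u ^ 2) :=
          mul_le_mul (hfb _) (hKbd u hu0) (abs_nonneg _) (by positivity)
        _ = (2 * Mf * M0) * (u ^ 2)⁻¹ := by ring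
    have hb3₂ : ∀ u ∈ Set.Ioi l, h₂ u ≤ (2 * Mf * M0) * u ^ (-2:ℝ) := by
      intro u hu
      have hu0 : (0:ℝ) < u := lt_trans hl0 hu
      rw [hrpow u hu0]
      calc h₂ u ≤ (2 * Mf) * (M0 / u ^ 2) :=
          mul_le_mul (hfb _) (hKbd u hu0) (abs_nonneg _) (by positivity)
        _ = (2 * Mf * M0) * (u ^ 2)⁻¹ := by ring
    have est₁ := claim h₁ Ih₁ hb1₁ hb2₁ hb3₁
    have est₂ := claim h₂ Ih₂ hb1₂ hb2₂ hb3₂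
    -- relation between the negative part of h₁ and h₂
    have hneg : (∫ u in Set.Iic (0:ℝ), h₁ u) = ∫ u in Set.Ioi (0:ℝ), h₂ u := by
      have heq : (fun u : ℝ => h₂ (-u)) = h₁ := by
        funext u
        simp only [hh₁, hh₂]
        rw [show x - -u / l = x + u / l by ring, hKe]
      have h' := integral_comp_neg_Iic (0:ℝ) h₂
      rw [neg_zero] at h'
      rw [← h']
      congr 1
      funext u
      rw [← heq]
    have htot : (∫ u : ℝ, h₁ u) =
        (∫ u in Set.Iic (0:ℝ), h₁ u) + ∫ u in Set.Ioi (0:ℝ), h₁ u := by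
      rw [← Set.compl_Iic]
      exact (integral_add_compl measurableSet_Iic Ih₁).symm
    -- step 2 : rewrite the difference as an integral
    have I1 : Integrable (fun u : ℝ => f (x + u / l) * K u) :=
      hKi.bdd_mul (hfc.comp (continuous_const.add (continuous_id.div_const l))).aestronglyMeasurable
        (Filter.Eventually.of_forall fun u => by rw [Real.norm_eq_abs]; exact hMf _)
    have I2 : Integrable (fun u : ℝ => f x * K u) := hKi.const_mul _
    have e5 : (∫ u : ℝ, f (x + u / l) * K u) - f x = ∫ u : ℝ, (f (x + u / l) - f x) * K u := by
      have hfx : (∫ u : ℝ, f x * K u) = f x := by rw [integral_const_mul, hK1, mul_one]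
      have he : (∫ u : ℝ, (f (x + u / l) - f x) * K u)
          = ∫ u : ℝ, (f (x + u / l) * K u - f x * K u) := by
        congr 1; funext u; ring
      rw [he, integral_sub I1 I2, hfx]
    have habs : |∫ u : ℝ, (f (x + u / l) - f x) * K u| ≤ ∫ u : ℝ, h₁ u := by
      have h' := norm_integral_le_integral_norm (μ := volume)
        (fun u : ℝ => (f (x + u / l) - f x) * K u)
      simpa only [Real.norm_eq_abs, abs_mul, hh₁] using h'
    -- lower bound for the modulus at 1/l
    have hinv : 1 / l ≤ 2 * modulus f (1 / l) / modulus f 1 := by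
      have hle1 : (1:ℝ) ≤ (⌈l⌉₊ : ℝ) * (1 / l) := by
        calc (1:ℝ) = l * (1 / l) := by field_simp
          _ ≤ (⌈l⌉₊ : ℝ) * (1 / l) :=
            mul_le_mul_of_nonneg_right (Nat.le_ceil l) (by positivity)
      have h1 : modulus f 1 ≤ (⌈l⌉₊ : ℝ) * modulus f (1 / l) :=
        mod_nat hMf (by positivity) ⌈l⌉₊ 1 zero_le_one hle1
      have h2 : (⌈l⌉₊ : ℝ) ≤ 2 * l := by
        have := Nat.ceil_lt_add_one hl0.le
        linarith
      have h3 : modulus f 1 ≤ 2 * l * modulus f (1 / l) := by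
        calc modulus f 1 ≤ (⌈l⌉₊ : ℝ) * modulus f (1 / l) := h1
          _ ≤ 2 * l * modulus f (1 / l) := mul_le_mul_of_nonneg_right h2 hωl0
      rw [div_le_div_iff₀ hl0 hω1pos]
      nlinarith
    -- final assembly
    set C : ℝ := max (2 * M0) (2 * IK + 8 * Mf * M0 / modulus f 1) with hC
    have hC1 : 2 * M0 ≤ C := le_max_left _ _
    have hC2 : 2 * IK + 8 * Mf * M0 / modulus f 1 ≤ C := le_max_right _ _
    have t1 : 2 * ((M0 / l) * J) ≤ C * ((1 / l) * J) := by
      have he : 2 * ((M0 / l) * J) = (2 * M0) * ((1 / l) * J) := by ring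
      rw [he]
      exact mul_le_mul_of_nonneg_right hC1 (mul_nonneg (by positivity) hJ0)
    have t2 : 4 * Mf * M0 / l ≤ (8 * Mf * M0 / modulus f 1) * modulus f (1 / l) := by
      calc 4 * Mf * M0 / l = (4 * Mf * M0) * (1 / l) := by ring
        _ ≤ (4 * Mf * M0) * (2 * modulus f (1 / l) / modulus f 1) :=
          mul_le_mul_of_nonneg_left hinv (by positivity)
        _ = (8 * Mf * M0 / modulus f 1) * modulus f (1 / l) := by ring
    have t3 : 2 * IK * modulus f (1 / l) + (8 * Mf * M0 / modulus f 1) * modulus f (1 / l)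
        ≤ C * modulus f (1 / l) := by
      have he : 2 * IK * modulus f (1 / l) + (8 * Mf * M0 / modulus f 1) * modulus f (1 / l)
          = (2 * IK + 8 * Mf * M0 / modulus f 1) * modulus f (1 / l) := by ring
      rw [he]
      exact mul_le_mul_of_nonneg_right hC2 hωl0
    rw [step1 l hl x, e5]
    calc |∫ u : ℝ, (f (x + u / l) - f x) * K u| ≤ ∫ u : ℝ, h₁ u := habs
      _ = (∫ u in Set.Iic (0:ℝ), h₁ u) + ∫ u in Set.Ioi (0:ℝ), h₁ u := htot
      _ = (∫ u in Set.Ioi (0:ℝ), h₂ u) + ∫ u in Set.Ioi (0:ℝ), h₁ u := by rw [hneg]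
      _ ≤ (modulus f (1 / l) * IK + (M0 / l) * J + 2 * Mf * M0 / l)
            + (modulus f (1 / l) * IK + (M0 / l) * J + 2 * Mf * M0 / l) :=
          add_le_add est₂ est₁
      _ = 2 * IK * modulus f (1 / l) + 2 * ((M0 / l) * J) + 4 * Mf * M0 / l := by ring
      _ ≤ 2 * IK * modulus f (1 / l) + C * ((1 / l) * J)
            + (8 * Mf * M0 / modulus f 1) * modulus f (1 / l) := by
          linarith [t1, t2]
      _ ≤ C * ((1 / l) * J) + C * modulus f (1 / l) := by linarith [t3]
end

section
/- Let K : ℝ → ℝ be even, integrable with ∫_ℝ K = 1, bounded on [−1,1], and with ∫₁^∞ u|K(u)| du < ∞. Let f : ℝ → ℝ be uniformly continuous and bounded with modulus of continuity ω(f;·). Then there is a constant C such that for all λ ≥ 1, sup_x |λ∫_ℝ f(t)K(λ(t−x))dt − f(x)| ≤ C·ω(f; 1/λ). -/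
open MeasureTheory Real

theorem fejer_type_uniform_estimate_first_moment (K : ℝ → ℝ)
    (hKe : ∀ t : ℝ, K (-t) = K t) (hKi : Integrable K) (hK1 : ∫ t : ℝ, K t = 1)
    (hKb : ∃ M : ℝ, ∀ x ∈ Set.Icc (-1:ℝ) 1, |K x| ≤ M)
    (hKd : IntegrableOn (fun u : ℝ => u * |K u|) (Set.Ioi 1))
    (f : ℝ → ℝ) (hf : UniformContinuous f) (hb : ∃ M : ℝ, ∀ x, |f x| ≤ M) :
    ∃ C : ℝ, ∀ l : ℝ, 1 ≤ l → ∀ x : ℝ,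
      |(l * ∫ t : ℝ, f t * K (l * (t - x))) - f x| ≤ C * modulus f (1 / l) := by
  obtain ⟨M, hM⟩ := hb
  obtain ⟨MK, hMK⟩ := hKb
  -- basic facts about the modulus
  have hbdd : ∀ t : ℝ,
      BddAbove {y : ℝ | ∃ s x : ℝ, 0 ≤ s ∧ s ≤ t ∧ y = |f (x + s) - f x|} := by
    intro t
    refine ⟨2 * M, ?_⟩
    rintro y ⟨s, x, _, _, rfl⟩
    calc |f (x + s) - f x| ≤ |f (x + s)| + |f x| := abs_sub _ _
      _ ≤ M + M := add_le_add (hM _) (hM _)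
      _ = 2 * M := by ring
  have hmem : ∀ {t s : ℝ} (x : ℝ), 0 ≤ s → s ≤ t → |f (x + s) - f x| ≤ modulus f t := by
    intro t s x hs hst
    exact le_csSup (hbdd t) ⟨s, x, hs, hst, rfl⟩
  have hnn : ∀ {t : ℝ}, 0 ≤ t → 0 ≤ modulus f t := by
    intro t ht
    have := hmem (t := t) 0 le_rfl ht
    exact le_trans (abs_nonneg _) this
  -- the key subadditivity estimate
  have ind : ∀ l : ℝ, 0 < l → ∀ n : ℕ, ∀ s : ℝ, 0 ≤ s → s ≤ n / l → ∀ x : ℝ,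
      |f (x + s) - f x| ≤ n * modulus f (1 / l) := by
    intro l hl0 n
    induction n with
    | zero =>
      intro s hs hsn x
      have hs0 : s = 0 := le_antisymm (by simpa using hsn) hs
      simp [hs0]
    | succ n ih =>
      intro s hs hsn x
      have hω : 0 ≤ modulus f (1 / l) := hnn (by positivity)
      by_cases h : s ≤ 1 / l
      · have h1 := hmem x hs h
        have h2 : modulus f (1 / l) ≤ (n + 1 : ℝ) * modulus f (1 / l) := by
          nlinarith
        push_cast
        linarith
      · push_neg at h
        have hsn' : s ≤ (n : ℝ) / l + 1 / l := by
          push_cast at hsn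
          rw [← add_div]
          linarith
        have h2 : s - 1 / l ≤ (n : ℝ) / l := by linarith
        have h3 : 0 ≤ s - 1 / l := le_of_lt (by linarith)
        have A := ih (s - 1 / l) h3 h2 (x + 1 / l)
        have hxs : x + 1 / l + (s - 1 / l) = x + s := by ring
        rw [hxs] at A
        have B := hmem x (by positivity) (le_refl (1 / l))
        have htri : |f (x + s) - f x| ≤ |f (x + s) - f (x + 1 / l)| + |f (x + 1 / l) - f x| :=
          abs_sub_le _ _ _
        push_cast
        linarith
  have key : ∀ l : ℝ, 1 ≤ l → ∀ s x : ℝ,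
      |f (x + s) - f x| ≤ (1 + |s| * l) * modulus f (1 / l) := by
    intro l hl s x
    have hl0 : 0 < l := lt_of_lt_of_le one_pos hl
    have hω : 0 ≤ modulus f (1 / l) := hnn (by positivity)
    have main : ∀ s x : ℝ, 0 ≤ s → |f (x + s) - f x| ≤ (1 + s * l) * modulus f (1 / l) := by
      intro s x hs
      set n := ⌈s * l⌉₊ with hn
      have h1 : s ≤ (n : ℝ) / l := by
        rw [le_div_iff₀ hl0]
        exact Nat.le_ceil _
      have h2 := ind l hl0 n s hs h1 x
      have h3 : (n : ℝ) ≤ s * l + 1 := by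
        have := Nat.ceil_lt_add_one (by positivity : (0:ℝ) ≤ s * l)
        exact this.le
      calc |f (x + s) - f x| ≤ (n : ℝ) * modulus f (1 / l) := h2
        _ ≤ (s * l + 1) * modulus f (1 / l) := by nlinarith
        _ = (1 + s * l) * modulus f (1 / l) := by ring
    rcases le_or_gt 0 s with h | h
    · rw [abs_of_nonneg h]
      exact main s x h
    · have h0 : (0:ℝ) ≤ -s := by linarith
      have := main (-s) (x + s) h0
      have hx : x + s + -s = x := by ring
      rw [hx] at this
      rw [abs_of_neg h]
      calc |f (x + s) - f x| = |f x - f (x + s)| := abs_sub_comm _ _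
        _ ≤ (1 + -s * l) * modulus f (1 / l) := this
  -- integrability of |u| * |K u|
  have hKm : AEStronglyMeasurable K (volume : Measure ℝ) := hKi.1
  have hGm : AEStronglyMeasurable (fun u : ℝ => |u| * |K u|) (volume : Measure ℝ) := by
    have h1 : AEStronglyMeasurable (fun u : ℝ => |K u|) (volume : Measure ℝ) := by
      simpa [Real.norm_eq_abs] using hKm.norm
    exact (continuous_abs.aestronglyMeasurable).mul h1
  have hG1 : IntegrableOn (fun u : ℝ => |u| * |K u|) (Set.Icc (-1:ℝ) 1) := by
    refine Integrable.mono (hKi.abs.restrict) hGm.restrict ?_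
    filter_upwards [ae_restrict_mem measurableSet_Icc] with u hu
    have hu1 : |u| ≤ 1 := abs_le.2 ⟨hu.1, hu.2⟩
    have h0 : (0:ℝ) ≤ |u| * |K u| := by positivity
    rw [Real.norm_eq_abs, Real.norm_eq_abs, abs_of_nonneg h0, abs_abs]
    nlinarith [abs_nonneg (K u)]
  have hG2 : IntegrableOn (fun u : ℝ => |u| * |K u|) (Set.Ioi (1:ℝ)) := by
    refine hKd.congr_fun ?_ measurableSet_Ioi
    intro u hu
    show u * |K u| = |u| * |K u|
    rw [abs_of_pos (lt_trans one_pos (Set.mem_Ioi.1 hu))]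
  have hG3 : IntegrableOn (fun u : ℝ => |u| * |K u|) (Set.Iio (-1:ℝ)) := by
    have hiff := (MeasurePreserving.integrableOn_comp_preimage
      (Measure.measurePreserving_neg (volume : Measure ℝ))
      (Homeomorph.neg ℝ).measurableEmbedding
      (f := fun u : ℝ => |u| * |K u|) (s := Set.Iio (-1:ℝ)))
    refine hiff.1 ?_
    have hset : (fun u : ℝ => -u) ⁻¹' Set.Iio (-1:ℝ) = Set.Ioi (1:ℝ) := by
      ext u
      simp only [Set.mem_preimage, Set.mem_Iio, Set.mem_Ioi]
      constructor <;> intro h <;> linarith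
    have hfun : ∀ u : ℝ, ((fun u : ℝ => |u| * |K u|) ∘ (fun u : ℝ => -u)) u
        = |u| * |K u| := by
      intro u
      simp [Function.comp, abs_neg, hKe]
    have : ((fun u : ℝ => |u| * |K u|) ∘ (fun u : ℝ => -u))
        = fun u : ℝ => |u| * |K u| := funext hfun
    rw [show ((fun u : ℝ => -u) ⁻¹' Set.Iio (-1:ℝ)) = Set.Ioi (1:ℝ) from hset, this]
    exact hG2
  have hGint : Integrable (fun u : ℝ => |u| * |K u|) := by
    have huniv : (Set.univ : Set ℝ) = Set.Iio (-1:ℝ) ∪ (Set.Icc (-1:ℝ) 1 ∪ Set.Ioi 1) := by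
      ext u
      simp only [Set.mem_univ, Set.mem_union, Set.mem_Iio, Set.mem_Icc, Set.mem_Ioi, true_iff]
      rcases lt_or_ge u (-1) with h | h
      · exact Or.inl h
      · rcases le_or_gt u 1 with h' | h'
        · exact Or.inr (Or.inl ⟨h, h'⟩)
        · exact Or.inr (Or.inr h')
    rw [← integrableOn_univ, huniv]
    exact hG3.union (hG1.union hG2)
  have hD : Integrable (fun u : ℝ => (1 + |u|) * |K u|) := by
    have := hKi.abs.add hGint
    refine this.congr (Filter.Eventually.of_forall fun u => ?_)
    simp only [Pi.add_apply]
    ring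
  refine ⟨∫ u : ℝ, (1 + |u|) * |K u|, ?_⟩
  intro l hl x
  have hl0 : 0 < l := lt_of_lt_of_le one_pos hl
  have hln : l ≠ 0 := ne_of_gt hl0
  have hω : 0 ≤ modulus f (1 / l) := hnn (by positivity)
  -- change of variables
  have hcv : l * (∫ t : ℝ, f t * K (l * (t - x))) = ∫ u : ℝ, f (x + u / l) * K u := by
    have e1 : (∫ t : ℝ, f t * K (l * (t - x))) = ∫ s : ℝ, f (x + s) * K (l * s) := by
      rw [← integral_add_left_eq_self (μ := (volume : Measure ℝ))
        (fun t : ℝ => f t * K (l * (t - x))) x]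
      simp [add_sub_cancel_left]
    have e2 : (∫ s : ℝ, f (x + s) * K (l * s))
        = |l⁻¹| • ∫ u : ℝ, f (x + u / l) * K u := by
      rw [← MeasureTheory.Measure.integral_comp_mul_left (fun u : ℝ => f (x + u / l) * K u) l]
      congr 1
      funext s
      rw [mul_div_cancel_left₀ s hln]
    rw [e1, e2, abs_of_pos (inv_pos.2 hl0), smul_eq_mul, ← mul_assoc,
      mul_inv_cancel₀ hln, one_mul]
  -- integrability of the integrands
  have hfm : AEStronglyMeasurable (fun u : ℝ => f (x + u / l)) (volume : Measure ℝ) := by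
    have : Continuous fun u : ℝ => x + u / l := by continuity
    exact (hf.continuous.comp this).aestronglyMeasurable
  have hint1 : Integrable (fun u : ℝ => f (x + u / l) * K u) :=
    hKi.bdd_mul hfm (c := M) (Filter.Eventually.of_forall fun u => by simpa [Real.norm_eq_abs] using hM (x + u / l))
  have hint2 : Integrable (fun u : ℝ => f x * K u) := hKi.const_mul _
  have hdiff : Integrable (fun u : ℝ => (f (x + u / l) - f x) * K u) := by
    have := hint1.sub hint2
    refine this.congr (Filter.Eventually.of_forall fun u => ?_)
    simp only [Pi.sub_apply]
    ring
  have herr : (l * ∫ t : ℝ, f t * K (l * (t - x))) - f x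
      = ∫ u : ℝ, (f (x + u / l) - f x) * K u := by
    rw [hcv]
    have hfun : (fun u : ℝ => (f (x + u / l) - f x) * K u)
        = fun u : ℝ => f (x + u / l) * K u - f x * K u := funext fun u => by ring
    rw [hfun, integral_sub hint1 hint2, integral_const_mul, hK1, mul_one]
  rw [herr]
  calc |∫ u : ℝ, (f (x + u / l) - f x) * K u|
      ≤ ∫ u : ℝ, |(f (x + u / l) - f x) * K u| := by
        have := norm_integral_le_integral_norm (μ := (volume : Measure ℝ))
          (fun u : ℝ => (f (x + u / l) - f x) * K u)
        simpa only [Real.norm_eq_abs] using this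
    _ ≤ ∫ u : ℝ, ((1 + |u|) * |K u|) * modulus f (1 / l) := by
        refine integral_mono hdiff.abs (hD.mul_const _) fun u => ?_
        rw [abs_mul]
        have h1 := key l hl (u / l) x
        have h2 : |u / l| * l = |u| := by
          rw [abs_div, abs_of_pos hl0, div_mul_cancel₀ _ hln]
        rw [h2] at h1
        calc |f (x + u / l) - f x| * |K u|
            ≤ ((1 + |u|) * modulus f (1 / l)) * |K u| :=
              mul_le_mul_of_nonneg_right h1 (abs_nonneg _)
          _ = ((1 + |u|) * |K u|) * modulus f (1 / l) := by ring
    _ = (∫ u : ℝ, (1 + |u|) * |K u|) * modulus f (1 / l) := integral_mul_const _ _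
end
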